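/- arXiv:0905.2283 — 11 statements merged into one kernel-verified Lean document; each statement's English description precedes it below -/
import Mathlib

section
/- Let K be a k-algebra with conjugation that is weakly distributive and contains a nonzero imaginary element (an element b with b + b̄ = 0). If a ∈ K satisfies n(a) = ā a = 1, then there exists a nonzero b ∈ K with b̄ a = b. -/
/-- A `k`-algebra with conjugation: a left `k`-vector space `K` with a
(not necessarily distributive or associative) multiplication and identity,
where `k` sits centrally (encoded via scalar compatibility), together with a
self-inverse `k`-linear conjugation fixing `k`. -/
structure ConjAlg (k : Type*) [Field k] (K : Type*) [AddCommGroup K] [Module k K] where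
  mul : K → K → K
  one : K
  one_mul : ∀ x, mul one x = x
  mul_one : ∀ x, mul x one = x
  smul_mul : ∀ (c : k) (x y : K), mul (c • x) y = c • mul x y
  mul_smul : ∀ (c : k) (x y : K), mul x (c • y) = c • mul x y
  conj : K →ₗ[k] K
  conj_conj : ∀ x, conj (conj x) = x
  conj_one : conj one = one

namespace ConjAlg

variable {k : Type*} [Field k] {K : Type*} [AddCommGroup K] [Module k K]

/-- The norm `n(a) = ā a`. -/
def n (A : ConjAlg k K) (x : K) : K := A.mul (A.conj x) x

/-- The trace `t(a) = a + ā`. -/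
def t (A : ConjAlg k K) (x : K) : K := x + A.conj x

/-- Membership in (the copy of) `k` inside `K`. -/
def InK (A : ConjAlg k K) (x : K) : Prop := ∃ c : k, x = c • A.one

/-- Weak right distributivity: `(a+b)c = ac + bc` whenever `a ∈ k`. -/
def WeakRightDistrib (A : ConjAlg k K) : Prop :=
  ∀ (c : k) (b y : K), A.mul (c • A.one + b) y = A.mul (c • A.one) y + A.mul b y

/-- Weak left distributivity: `c(a+b) = ca + cb` whenever `a ∈ k`. -/
def WeakLeftDistrib (A : ConjAlg k K) : Prop :=
  ∀ (c : k) (b y : K), A.mul y (c • A.one + b) = A.mul y (c • A.one) + A.mul y b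

/-- Full left distributivity. -/
def LeftDistrib (A : ConjAlg k K) : Prop :=
  ∀ x y z : K, A.mul x (y + z) = A.mul x y + A.mul x z

/-- Full right distributivity. -/
def RightDistrib (A : ConjAlg k K) : Prop :=
  ∀ x y z : K, A.mul (x + y) z = A.mul x z + A.mul y z

/-- Left alternativity: `a(ab) = a²b`. -/
def LeftAlt (A : ConjAlg k K) : Prop :=
  ∀ a b : K, A.mul a (A.mul a b) = A.mul (A.mul a a) b

/-- The trace is `k`-valued. -/
def TraceKValued (A : ConjAlg k K) : Prop := ∀ x : K, A.InK (A.t x)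

/-- The norm is `k`-valued. -/
def NormKValued (A : ConjAlg k K) : Prop := ∀ x : K, A.InK (A.n x)

/-- The norm is anisotropic. -/
def Anisotropic (A : ConjAlg k K) : Prop := ∀ x : K, x ≠ 0 → A.n x ≠ 0

/-- The norm is symmetric: `n(ā) = n(a)`. -/
def NormSymmetric (A : ConjAlg k K) : Prop := ∀ x : K, A.n (A.conj x) = A.n x

end ConjAlg

theorem stmt0 {k : Type*} [Field k] {K : Type*} [AddCommGroup K] [Module k K] (A : ConjAlg k K)
    (hwr : A.WeakRightDistrib) (hwl : A.WeakLeftDistrib)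
    (him : ∃ b : K, b ≠ 0 ∧ A.t b = 0)
    (a : K) (ha : A.n a = A.one) :
    ∃ b : K, b ≠ 0 ∧ A.mul (A.conj b) a = b := by
  by_cases hneg : a = -A.one
  · obtain ⟨b, hb0, hbt⟩ := him
    refine ⟨b, hb0, ?_⟩
    have hcb : A.conj b = -b := by
      have := hbt
      unfold ConjAlg.t at this
      linear_combination (norm := abel_nf) this
    rw [hcb, hneg]
    have : (-A.one : K) = (-1 : k) • A.one := by
      rw [neg_smul, one_smul]
    rw [this, A.mul_smul, A.mul_one, neg_smul, one_smul, neg_neg]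
  · refine ⟨A.one + a, ?_, ?_⟩
    · intro h
      apply hneg
      linear_combination (norm := abel_nf) h
    · rw [map_add, A.conj_one]
      have h1 : (A.one : K) = (1 : k) • A.one := (one_smul k A.one).symm
      rw [h1, hwr 1 (A.conj a) a, A.smul_mul, A.one_mul, one_smul]
      show a + A.n a = (1:k) • A.one + a
      rw [ha, one_smul]
      abel
end

section
/- Let K be a weakly right distributive left alternative k-algebra with conjugation whose trace and norm are k-valued, and suppose the norm is anisotropic (n(a) ≠ 0 for a ≠ 0) and symmetric (n(ā) = n(a)). Then K is a division algebra: every nonzero a ∈ K has a unique two-sided multiplicative inverse, namely a⁻¹ = ā·n(a)⁻¹. -/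
theorem stmt2 {k : Type*} [Field k] {K : Type*} [AddCommGroup K] [Module k K] (A : ConjAlg k K)
    (hwr : A.WeakRightDistrib) (hla : A.LeftAlt)
    (ht : A.TraceKValued) (hn : A.NormKValued)
    (haniso : A.Anisotropic) (hsym : A.NormSymmetric) :
    ∀ a : K, a ≠ 0 → ∀ c : k, A.n a = c • A.one →
      A.mul a (c⁻¹ • A.conj a) = A.one ∧
      A.mul (c⁻¹ • A.conj a) a = A.one ∧
      ∀ b : K, A.mul a b = A.one ∧ A.mul b a = A.one → b = c⁻¹ • A.conj a :=by
  intro a ha c hc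
  have hc0 : c ≠ 0 := by
    intro h
    exact haniso a ha (by rw [hc, h, zero_smul])
  -- a * conj a = c • 1
  have haconj : A.mul a (A.conj a) = c • A.one := by
    have := hsym a
    unfold ConjAlg.n at this
    rw [A.conj_conj] at this
    rw [this]; exact hc
  have h1 : A.mul a (c⁻¹ • A.conj a) = A.one := by
    rw [A.mul_smul, haconj, smul_smul, inv_mul_cancel₀ hc0, one_smul]
  have h2 : A.mul (c⁻¹ • A.conj a) a = A.one := by
    have : A.mul (A.conj a) a = c • A.one := hc
    rw [A.smul_mul, this, smul_smul, inv_mul_cancel₀ hc0, one_smul]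
  refine ⟨h1, h2, ?_⟩
  -- trace: conj a = s • 1 - a
  obtain ⟨s, hs⟩ := ht a
  have hconj : A.conj a = s • A.one - a := by
    unfold ConjAlg.t at hs
    linear_combination (norm := abel_nf) hs
  -- a² = s • a - c • 1
  have hsq : A.mul a a = s • a - c • A.one := by
    have e : A.mul (A.conj a) a = s • a - A.mul a a := by
      rw [hconj, sub_eq_add_neg, ← neg_one_smul k a, hwr s (((-1:k)) • a) a,
        A.smul_mul, A.smul_mul, A.one_mul, neg_one_smul]
      abel
    have e2 := e
    rw [show A.mul (A.conj a) a = A.n a from rfl, hc] at e2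
    linear_combination (norm := abel_nf) e2
  intro b ⟨hab, hba⟩
  have key : A.mul (A.mul a a) b = -(c • b) + s • A.one := by
    rw [hsq, sub_eq_add_neg, add_comm, ← neg_smul, hwr (-c) (s • a) b,
      A.smul_mul, A.smul_mul, A.one_mul, hab, neg_smul]
  have key2 : a = -(c • b) + s • A.one := by
    have := hla a b
    rw [hab, A.mul_one] at this
    rw [this, key]
  have hcb : c • b = A.conj a := by
    rw [hconj]
    linear_combination (norm := abel_nf) key2
  calc b = c⁻¹ • (c • b) := by rw [smul_smul, inv_mul_cancel₀ hc0, one_smul]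
    _ = c⁻¹ • A.conj a := by rw [hcb]
end

section
/- Let K be a weakly distributive k-algebra with conjugation whose trace and norm are k-valued. Then the conjugation respects squares: (a²)‾ = (ā)² for all a ∈ K. -/
theorem stmt5 {k : Type*} [Field k] {K : Type*} [AddCommGroup K] [Module k K] (A : ConjAlg k K)
    (hwr : A.WeakRightDistrib) (hwl : A.WeakLeftDistrib)
    (ht : A.TraceKValued) (hn : A.NormKValued) :
    ∀ a : K, A.conj (A.mul a a) = A.mul (A.conj a) (A.conj a) := by
  intro a
  have mnegr : ∀ x y : K, A.mul x (-y) = -A.mul x y := by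
    intro x y
    rw [show (-y) = (-1 : k) • y by simp, A.mul_smul]; simp
  have mnegl : ∀ x y : K, A.mul (-x) y = -A.mul x y := by
    intro x y
    rw [show (-x) = (-1 : k) • x by simp, A.smul_mul]; simp
  obtain ⟨c, hc⟩ := ht a
  obtain ⟨d, hd⟩ := hn (A.conj a)
  have hd' : A.mul a (A.conj a) = d • A.one := by
    rw [ConjAlg.n, A.conj_conj] at hd; exact hd
  have hca : A.conj a = c • A.one - a := by
    rw [ConjAlg.t] at hc
    rw [← hc]; abel
  have ha : a = c • A.one - A.conj a := by rw [hca]; abel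
  -- a·a = c•a - a·(conj a)
  have haa : A.mul a a = c • a - A.mul a (A.conj a) := by
    have h := hwl c (-(A.conj a)) a
    rw [show c • A.one + -(A.conj a) = a by rw [hca]; abel, A.mul_smul, A.mul_one, mnegr] at h
    rw [h]; abel
  -- conj(a·a)
  have hconj : A.conj (A.mul a a) = c • A.conj a - A.mul a (A.conj a) := by
    rw [haa, map_sub, map_smul, hd', map_smul, A.conj_one]
  rw [hconj]
  -- (conj a)·(conj a)
  have h2 := hwr c (-a) (A.conj a)
  rw [show c • A.one + -a = A.conj a by rw [hca]; abel, A.smul_mul, A.one_mul, mnegl] at h2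
  rw [h2]; abel
end

section
/- Let K be a left alternative, weakly right distributive k-algebra with conjugation whose trace and norm are k-valued. Then the norm respects squares: n(a²) = n(a)² for all a ∈ K. -/
theorem stmt6 {k : Type*} [Field k] {K : Type*} [AddCommGroup K] [Module k K] (A : ConjAlg k K)
    (hla : A.LeftAlt) (hwr : A.WeakRightDistrib)
    (ht : A.TraceKValued) (hn : A.NormKValued) :
    ∀ a : K, A.n (A.mul a a) = A.mul (A.n a) (A.n a) := by
  -- helper: (c • 1) * y = c • y
  have h1 : ∀ (c : k) (y : K), A.mul (c • A.one) y = c • y := fun c y => by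
    rw [A.smul_mul, A.one_mul]
  -- helper: (c • 1 + b) * y = c • y + b * y
  have h2 : ∀ (c : k) (b y : K), A.mul (c • A.one + b) y = c • y + A.mul b y :=
    fun c b y => by rw [hwr, h1]
  intro a
  obtain ⟨τ, hτ⟩ := ht a
  obtain ⟨ν, hν⟩ := hn a
  rw [ConjAlg.t] at hτ
  rw [ConjAlg.n] at hν
  have hconj : A.conj a = τ • A.one - a := eq_sub_of_add_eq' hτ
  have hsq : A.mul a a = τ • a - ν • A.one := by
    have h3 : ν • A.one = A.mul (τ • A.one + (-1 : k) • a) a := by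
      rw [← hν, hconj]; congr 1; module
    rw [h2, A.smul_mul] at h3
    rw [h3]; module
  -- a² * a
  have hsqa : A.mul (A.mul a a) a = (-ν) • a + τ • A.mul a a := by
    have : A.mul a a = (-ν) • A.one + τ • a := by rw [hsq]; module
    nth_rewrite 1 [this]
    rw [h2, A.smul_mul]
  -- ā * a² = ν • a
  have hca : A.mul (A.conj a) (A.mul a a) = ν • a := by
    rw [hconj, show τ • A.one - a = τ • A.one + (-1 : k) • a from by module,
      h2, A.smul_mul, neg_one_smul, hla, hsqa]
    module
  -- conj (a²)
  have hcsq : A.conj (A.mul a a) = (-ν) • A.one + τ • A.conj a := by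
    rw [hsq, map_sub, map_smul, map_smul, A.conj_one]; module
  simp only [ConjAlg.n]
  rw [hν, hcsq, h2, A.smul_mul, hca, h1, hsq]
  module
end

section
/- Let K be a weakly right distributive, left alternative k-algebra with conjugation, with k-valued trace and norm. If there exists a k-linear map T : K → K restricting to the identity on k and satisfying T((a(bc))‾) = T(c̄·(b̄·ā)) for all a,b,c ∈ K, then the norm is multiplicative: n(ab) = n(a)n(b) for all a,b ∈ K. -/
theorem stmt7 {k : Type*} [Field k] {K : Type*} [AddCommGroup K] [Module k K] (A : ConjAlg k K)
    (hwr : A.WeakRightDistrib) (hla : A.LeftAlt)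
    (ht : A.TraceKValued) (hn : A.NormKValued)
    (T : K →ₗ[k] K)
    (hTk : ∀ c : k, T (c • A.one) = c • A.one)
    (hT : ∀ a b c : K,
      T (A.conj (A.mul a (A.mul b c))) =
        T (A.mul (A.conj c) (A.mul (A.conj b) (A.conj a)))) :
    ∀ a b : K, A.n (A.mul a b) = A.mul (A.n a) (A.n b) := by
  -- key identity: conj x * (x * y) = ν • y  whenever n x = ν • 1
  have key : ∀ (x : K) (ν : k), A.n x = ν • A.one → ∀ y : K,
      A.mul (A.conj x) (A.mul x y) = ν • y := by
    intro x ν hν y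
    obtain ⟨c, hc⟩ := ht x
    have hconj : A.conj x = c • A.one + (-1 : k) • x := by
      have : x + A.conj x = c • A.one := hc
      rw [neg_one_smul]
      linear_combination (norm := abel) this
    have hsq : A.mul x x = (-ν : k) • A.one + c • x := by
      have h1 : A.mul (A.conj x) x = ν • A.one := hν
      rw [hconj, hwr, A.smul_mul, A.one_mul, A.smul_mul, neg_one_smul] at h1
      rw [neg_smul]
      linear_combination (norm := abel) -h1
    rw [hconj, hwr, A.smul_mul, A.one_mul, A.smul_mul, neg_one_smul, hla, hsq,
      hwr, A.smul_mul, A.one_mul, A.smul_mul, neg_smul]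
    abel
  intro a b
  obtain ⟨na, hna⟩ := hn a
  obtain ⟨nb, hnb⟩ := hn b
  obtain ⟨m, hm⟩ := hn (A.mul a b)
  have hTeq := hT (A.conj (A.mul a b)) a b
  have hL : T (A.conj (A.mul (A.conj (A.mul a b)) (A.mul a b))) = m • A.one := by
    have : A.mul (A.conj (A.mul a b)) (A.mul a b) = m • A.one := hm
    rw [this, map_smul, A.conj_one, hTk]
  have hR : T (A.mul (A.conj b) (A.mul (A.conj a) (A.conj (A.conj (A.mul a b)))))
      = (na * nb) • A.one := by
    rw [A.conj_conj, key a na hna, A.mul_smul]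
    have : A.mul (A.conj b) b = nb • A.one := hnb
    rw [this, smul_smul, hTk]
  rw [hL, hR] at hTeq
  show A.mul (A.conj (A.mul a b)) (A.mul a b) = _
  have hm' : A.mul (A.conj (A.mul a b)) (A.mul a b) = m • A.one := hm
  rw [hm', hna, hnb, A.smul_mul, A.mul_smul, A.one_mul, smul_smul, hTeq]
end

section
/- Let K be a weakly distributive left alternative k-algebra with conjugation, with k-valued trace, anisotropic k-valued norm, and containing a nonzero imaginary element. Then a ∈ K satisfies n(a) = 1 if and only if there exists a nonzero b ∈ K with b̄ a = b. -/
theorem stmt8 {k : Type*} [Field k] {K : Type*} [AddCommGroup K] [Module k K] (A : ConjAlg k K)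
    (hwr : A.WeakRightDistrib) (hwl : A.WeakLeftDistrib) (hla : A.LeftAlt)
    (ht : A.TraceKValued) (hn : A.NormKValued) (haniso : A.Anisotropic)
    (him : ∃ b : K, b ≠ 0 ∧ A.t b = 0) :
    ∀ a : K, A.n a = A.one ↔ ∃ b : K, b ≠ 0 ∧ A.mul (A.conj b) a = b := by 
  have smul1mul : ∀ (c : k) (y : K), A.mul (c • A.one) y = c • y := fun c y => by
    rw [A.smul_mul, A.one_mul]
  have mulsmul1 : ∀ (c : k) (y : K), A.mul y (c • A.one) = c • y := fun c y => by
    rw [A.mul_smul, A.mul_one]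
  intro a
  constructor
  · intro hna
    by_cases h1 : A.one + a = 0
    · obtain ⟨b, hb0, hbt⟩ := him
      refine ⟨b, hb0, ?_⟩
      have ha : a = -A.one := (neg_eq_of_add_eq_zero_right h1).symm
      have hcb : A.conj b = -b := by
        have h : b + A.conj b = 0 := hbt
        rw [eq_neg_iff_add_eq_zero, add_comm]
        exact h
      rw [hcb, ha, ← neg_one_smul k A.one, A.mul_smul, A.mul_one, neg_one_smul, neg_neg]
    · refine ⟨A.one + a, h1, ?_⟩
      have h2 : A.conj (A.one + a) = (1:k) • A.one + A.conj a := by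
        rw [map_add, A.conj_one, one_smul]
      rw [h2, hwr, smul1mul]
      have h3 : A.mul (A.conj a) a = A.one := hna
      rw [h3, one_smul, add_comm]
  · rintro ⟨b, hb0, hba⟩
    obtain ⟨τ, hτ⟩ := ht b
    obtain ⟨ν, hν⟩ := hn b
    set c := A.conj b with hc
    have hcb : c + b = τ • A.one := by
      have h : b + A.conj b = τ • A.one := hτ
      rw [add_comm] at h
      exact h
    have hνn : A.mul c b = ν • A.one := hν
    have hb2 : b = τ • A.one + (-1:k) • c := by
      rw [neg_one_smul, ← hcb]; abel
    have hsq : A.mul c c = τ • c - ν • A.one := by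
      have h := hwl τ ((-1:k) • c) c
      rw [← hb2, mulsmul1, A.mul_smul, neg_one_smul, hνn] at h
      rw [eq_sub_iff_add_eq, h]
      abel
    have halt := hla c a
    rw [hba, hνn, hsq] at halt
    have harg : τ • c - ν • A.one = (-ν) • A.one + τ • c := by
      rw [neg_smul]; abel
    rw [harg, hwr, smul1mul, A.smul_mul, hba] at halt
    have hνne : ν ≠ 0 := by
      intro h
      exact haniso b hb0 (by rw [hν, h, zero_smul])
    have hkey : ν • a = τ • b - ν • A.one := by
      rw [eq_sub_iff_add_eq, halt, neg_smul]
      abel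
    have ha : a = (ν⁻¹ * τ) • b - A.one := by
      have h := congrArg (fun x => ν⁻¹ • x) hkey
      simp only [smul_sub, smul_smul, inv_mul_cancel₀ hνne, one_smul] at h
      exact h
    have hca : A.conj a = (ν⁻¹ * τ) • c - A.one := by
      rw [ha, map_sub, map_smul, A.conj_one, ← hc]
    have hc2 : c = τ • A.one - b := by
      rw [← hcb]; abel
    have e1 : A.conj a = (-1 : k) • A.one + (ν⁻¹ * τ) • c := by
      rw [hca, neg_one_smul]; abel
    have e2 : a = (-1 : k) • A.one + (ν⁻¹ * τ) • b := by
      rw [ha, neg_one_smul]; abel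
    show A.mul (A.conj a) a = A.one
    rw [e1, e2, hwl, mulsmul1, A.mul_smul, hwr, smul1mul, A.smul_mul, hνn, hc2]
    match_scalars <;> field_simp <;> ring
end

section
/- Let K be a k-algebra with conjugation and D ∈ k. The conjugation on K is an involution (i.e., (ab)‾ = b̄·ā for all a,b ∈ K) if and only if the conjugation on the Cayley-Dickson double K ×_D K is an involution. -/
/-- The Cayley-Dickson double multiplication: `(a,b)(c,d) = (ac + D·d·b̄, ā·d + c·b)`. -/
def cdMul {k : Type*} [Field k] {K : Type*} [AddCommGroup K] [Module k K]
    (A : ConjAlg k K) (D : k) (x y : K × K) : K × K :=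
  (A.mul x.1 y.1 + D • A.mul y.2 (A.conj x.2),
   A.mul (A.conj x.1) y.2 + A.mul y.1 x.2)

/-- The Cayley-Dickson double conjugation: `(a,b)‾ = (ā, −b)`. -/
def cdConj {k : Type*} [Field k] {K : Type*} [AddCommGroup K] [Module k K]
    (A : ConjAlg k K) (x : K × K) : K × K :=
  (A.conj x.1, -x.2)

theorem stmt10 {k : Type*} [Field k] {K : Type*} [AddCommGroup K] [Module k K] (A : ConjAlg k K) (D : k) :
    (∀ a b : K, A.conj (A.mul a b) = A.mul (A.conj b) (A.conj a)) ↔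
    (∀ x y : K × K, cdConj A (cdMul A D x y) = cdMul A D (cdConj A y) (cdConj A x)) := by
  have mz : ∀ x : K, A.mul x 0 = 0 := fun x => by
    have := A.mul_smul (0:k) x 0; simpa using this
  have zm : ∀ x : K, A.mul 0 x = 0 := fun x => by
    have := A.smul_mul (0:k) x x; simpa using this
  have negm : ∀ a b : K, A.mul (-a) b = -A.mul a b := fun a b => by
    rw [← neg_one_smul k a, A.smul_mul, neg_one_smul]
  have mneg : ∀ a b : K, A.mul a (-b) = -A.mul a b := fun a b => by
    rw [← neg_one_smul k b, A.mul_smul, neg_one_smul]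
  constructor
  · intro h x y
    simp only [cdMul, cdConj, Prod.mk.injEq, map_add, map_smul, map_neg, h, A.conj_conj,
      negm, mneg, neg_neg, neg_add]
    exact ⟨trivial, by abel⟩
  · intro h a b
    have := congrArg Prod.fst (h (a, 0) (b, 0))
    simpa [cdMul, cdConj, mz, zm] using this
end

section
/- Let K be a left distributive, weakly right distributive k-algebra with conjugation with k-valued trace and norm, and D ∈ k. Then K is associative if and only if the Cayley-Dickson double K ×_D K is left alternative. -/
section CD12Aux

variable {k : Type*} [Field k] {K : Type*} [AddCommGroup K] [Module k K] (A : ConjAlg k K)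

lemma cd_zero_mul (y : K) : A.mul 0 y = 0 := by
  have h := A.smul_mul 0 0 y; simpa using h

lemma cd_mul_zero (x : K) : A.mul x 0 = 0 := by
  have h := A.mul_smul 0 x 0; simpa using h

lemma cd_neg_mul (x y : K) : A.mul (-x) y = -A.mul x y := by
  have h := A.smul_mul (-1) x y; simpa using h

lemma cd_mul_neg (x y : K) : A.mul x (-y) = -A.mul x y := by
  have h := A.mul_smul (-1) x y; simpa using h

lemma cd_smul_one_mul (c : k) (y : K) : A.mul (c • A.one) y = c • y := by
  rw [A.smul_mul, A.one_mul]

lemma cd_mul_smul_one (c : k) (y : K) : A.mul y (c • A.one) = c • y := by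
  rw [A.mul_smul, A.mul_one]

lemma cd_mul_sub (hld : A.LeftDistrib) (x y z : K) :
    A.mul x (y - z) = A.mul x y - A.mul x z := by
  rw [sub_eq_add_neg, hld, cd_mul_neg, ← sub_eq_add_neg]

lemma cd_wsub (hwr : A.WeakRightDistrib) (c : k) (b y : K) :
    A.mul (c • A.one - b) y = c • y - A.mul b y := by
  rw [sub_eq_add_neg, hwr, cd_smul_one_mul, cd_neg_mul, ← sub_eq_add_neg]

lemma cd_wadd (hwr : A.WeakRightDistrib) (c : k) (b y : K) :
    A.mul (c • A.one + b) y = c • y + A.mul b y := by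
  rw [hwr, cd_smul_one_mul]

/-- Every element satisfies the quadratic relation coming from the `k`-valued
trace and norm. -/
lemma cd_tau_nu (hld : A.LeftDistrib) (hwr : A.WeakRightDistrib)
    (ht : A.TraceKValued) (hn : A.NormKValued) (u : K) :
    ∃ τ ν : k, A.conj u = τ • A.one - u ∧ A.mul (A.conj u) u = ν • A.one ∧
      A.mul u u = τ • u - ν • A.one ∧ A.mul u (A.conj u) = ν • A.one := by
  obtain ⟨τ, hτ⟩ := ht u
  obtain ⟨ν, hν⟩ := hn u
  simp only [ConjAlg.t] at hτ
  simp only [ConjAlg.n] at hν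
  have hc : A.conj u = τ • A.one - u := by
    rw [eq_sub_iff_add_eq, add_comm]; exact hτ
  have h1 : τ • u - A.mul u u = ν • A.one := by
    rw [← cd_wsub A hwr, ← hc]; exact hν
  have hsq : A.mul u u = τ • u - ν • A.one := by rw [← h1]; abel
  have hun : A.mul u (A.conj u) = ν • A.one := by
    rw [hc, cd_mul_sub A hld, cd_mul_smul_one, hsq]; abel
  exact ⟨τ, ν, hc, hν, hsq, hun⟩

/-- Core of right distributivity: if `u` has nonzero norm then left
multiplication by things distributes over `u + v`. -/
lemma cd_rd_core (hld : A.LeftDistrib) (hwr : A.WeakRightDistrib)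
    (hassoc : ∀ a b c : K, A.mul (A.mul a b) c = A.mul a (A.mul b c))
    (u : K) (τ ν : k) (hc : A.conj u = τ • A.one - u)
    (hnu : A.mul (A.conj u) u = ν • A.one) (hν : ν ≠ 0) (v z : K) :
    A.mul (u + v) z = A.mul u z + A.mul v z := by
  have h1 : τ • u - A.mul u u = ν • A.one := by
    rw [← cd_wsub A hwr, ← hc]; exact hnu
  have hsq : A.mul u u = τ • u - ν • A.one := by rw [← h1]; abel
  have hun : A.mul u (A.conj u) = ν • A.one := by
    rw [hc, cd_mul_sub A hld, cd_mul_smul_one, hsq]; abel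
  have step1 : A.mul (A.conj u) (A.mul (u + v) z)
      = ν • z + A.mul (A.conj u) (A.mul v z) := by
    rw [← hassoc, hld, hnu, cd_wadd A hwr, hassoc]
  have step2 : ν • A.mul (u + v) z = ν • (A.mul u z + A.mul v z) := by
    calc ν • A.mul (u + v) z
        = A.mul (ν • A.one) (A.mul (u + v) z) := (cd_smul_one_mul A ν _).symm
      _ = A.mul (A.mul u (A.conj u)) (A.mul (u + v) z) := by rw [hun]
      _ = A.mul u (A.mul (A.conj u) (A.mul (u + v) z)) := hassoc _ _ _
      _ = A.mul u (ν • z + A.mul (A.conj u) (A.mul v z)) := by rw [step1]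
      _ = ν • A.mul u z + A.mul (A.mul u (A.conj u)) (A.mul v z) := by
          rw [hld, A.mul_smul, hassoc]
      _ = ν • (A.mul u z + A.mul v z) := by
          rw [hun, cd_smul_one_mul, smul_add]
  have := congrArg (fun w => ν⁻¹ • w) step2
  simp only [smul_smul, inv_mul_cancel₀ hν, one_smul] at this; exact this

/-- If some shift `u + c·1` of `u` has nonzero norm then left multiplication
distributes over `u + v`. -/
lemma cd_rd_shift (hld : A.LeftDistrib) (hwr : A.WeakRightDistrib)
    (hassoc : ∀ a b c : K, A.mul (A.mul a b) c = A.mul a (A.mul b c))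
    (u : K) (τ ν c : k) (hc : A.conj u = τ • A.one - u)
    (hnu : A.mul (A.conj u) u = ν • A.one)
    (hgood : ν + c * τ + c * c ≠ 0) (v z : K) :
    A.mul (u + v) z = A.mul u z + A.mul v z := by
  have h1 : τ • u - A.mul u u = ν • A.one := by
    rw [← cd_wsub A hwr, ← hc]; exact hnu
  have hsq : A.mul u u = τ • u - ν • A.one := by rw [← h1]; abel
  set u' := u + c • A.one with hu'
  have hc' : A.conj u' = (τ + 2 * c) • A.one - u' := by
    rw [hu', map_add, map_smul, A.conj_one, hc]
    module
  have hnu' : A.mul (A.conj u') u' = (ν + c * τ + c * c) • A.one := by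
    have e : A.conj u' = (τ + c) • A.one - u := by
      rw [hu', map_add, map_smul, A.conj_one, hc]; module
    rw [e, cd_wsub A hwr, hu', hld, cd_mul_smul_one, hsq]
    module
  have h2 := cd_rd_core A hld hwr hassoc u' (τ + 2 * c) (ν + c * τ + c * c)
    hc' hnu' hgood v z
  have e1 : u' + v = c • A.one + (u + v) := by rw [hu']; abel
  have e2 : u' = c • A.one + u := by rw [hu']; abel
  rw [e1, e2, cd_wadd A hwr, cd_wadd A hwr, add_assoc] at h2
  exact add_left_cancel h2

/-- Full right distributivity follows from associativity. -/
lemma cd_rd (hld : A.LeftDistrib) (hwr : A.WeakRightDistrib)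
    (ht : A.TraceKValued) (hn : A.NormKValued)
    (hassoc : ∀ a b c : K, A.mul (A.mul a b) c = A.mul a (A.mul b c)) :
    A.RightDistrib := by
  intro u v z
  by_cases hone : A.one = 0
  · have hz : ∀ x : K, x = 0 := by
      intro x
      calc x = A.mul x A.one := (A.mul_one x).symm
        _ = A.mul x 0 := by rw [hone]
        _ = 0 := cd_mul_zero A x
    rw [hz (A.mul (u + v) z), hz (A.mul u z), hz (A.mul v z), add_zero]
  obtain ⟨τ, ν, hc, hnu, hsq, hun⟩ := cd_tau_nu A hld hwr ht hn u
  by_cases hg : ∃ c : k, ν + c * τ + c * c ≠ 0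
  · obtain ⟨c, hcg⟩ := hg
    exact cd_rd_shift A hld hwr hassoc u τ ν c hc hnu hcg v z
  push_neg at hg
  have h0 : ν = 0 := by have := hg 0; linear_combination this
  have hτ1 : τ = -1 := by have := hg 1; linear_combination this - h0
  have hk : ∀ c : k, c = 0 ∨ c = 1 := by
    intro c
    by_cases hcz : c = 0
    · exact Or.inl hcz
    right
    have h3 : c * (c + τ) = 0 := by linear_combination hg c - h0
    rcases mul_eq_zero.mp h3 with h' | h'
    · exact absurd h' hcz
    linear_combination h' - hτ1
  have htwo : (1 : k) + 1 = 0 := by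
    rcases hk (1 + 1) with h | h
    · exact h
    · exact absurd (by linear_combination h) (one_ne_zero (α := k))
  obtain ⟨τv, νv, hcv, hnv, hsv, huv⟩ := cd_tau_nu A hld hwr ht hn v
  by_cases hgv : ∃ c : k, νv + c * τv + c * c ≠ 0
  · obtain ⟨c, hcg⟩ := hgv
    have h4 := cd_rd_shift A hld hwr hassoc v τv νv c hcv hnv hcg u z
    rw [add_comm v u] at h4
    rw [h4]; exact add_comm _ _
  push_neg at hgv
  have h0v : νv = 0 := by have := hgv 0; linear_combination this
  have hτv1 : τv = -1 := by have := hgv 1; linear_combination this - h0v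
  -- now w = u + v is "good"
  obtain ⟨τw, νw, hcw, hnw, hsw, huw⟩ := cd_tau_nu A hld hwr ht hn (u + v)
  have hτw : τw = 0 := by
    -- from conj (u+v) = conj u + conj v
    have e : A.conj (u + v) = (τ + τv) • A.one - (u + v) := by
      rw [map_add, hc, hcv]; module
    have e2 : (τw - (τ + τv)) • A.one = 0 := by
      rw [sub_smul]; rw [hcw] at e
      have : τw • A.one - (u + v) - ((τ + τv) • A.one - (u + v)) = 0 := by
        rw [e]; abel
      calc τw • A.one - (τ + τv) • A.one
          = τw • A.one - (u + v) - ((τ + τv) • A.one - (u + v)) := by abel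
        _ = 0 := this
    have hτweq : τw - (τ + τv) = 0 := by
      by_contra hne
      exact hone (by
        have := congrArg (fun w => (τw - (τ + τv))⁻¹ • w) e2
        simpa [smul_smul, inv_mul_cancel₀ hne] using this)
    have : τw = τ + τv := by linear_combination hτweq
    rw [this, hτ1, hτv1]; linear_combination -htwo
  have hwgood : ∃ c : k, νw + c * τw + c * c ≠ 0 := by
    by_cases hνw : νw = 0
    · exact ⟨1, by rw [hνw, hτw]; simp⟩
    · exact ⟨0, by simpa using hνw⟩
  obtain ⟨c, hcg⟩ := hwgood
  have h5 := cd_rd_shift A hld hwr hassoc (u + v) τw νw c hcw hnw hcg v z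
  have hvv : v + v = 0 := by
    have : ((1 : k) + 1) • v = v + v := by rw [add_smul, one_smul]
    rw [htwo, zero_smul] at this; exact this.symm
  have e6 : u + v + v = u := by rw [add_assoc, hvv, add_zero]
  rw [e6] at h5
  have hmz : A.mul v z + A.mul v z = 0 := by
    have : ((1 : k) + 1) • A.mul v z = A.mul v z + A.mul v z := by
      rw [add_smul, one_smul]
    rw [htwo, zero_smul] at this; exact this.symm
  rw [h5, add_assoc, hmz, add_zero]

end CD12Aux

theorem stmt12 {k : Type*} [Field k] {K : Type*} [AddCommGroup K] [Module k K] (A : ConjAlg k K) (D : k)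
    (hld : A.LeftDistrib) (hwr : A.WeakRightDistrib)
    (ht : A.TraceKValued) (hn : A.NormKValued) :
    (∀ a b c : K, A.mul (A.mul a b) c = A.mul a (A.mul b c)) ↔
    (∀ x y : K × K, cdMul A D x (cdMul A D x y) = cdMul A D (cdMul A D x x) y) := by
  constructor
  · -- associative ⇒ left alternative double
    intro hassoc x y
    obtain ⟨a, b⟩ := x
    obtain ⟨c, d⟩ := y
    have hrd : A.RightDistrib := cd_rd A hld hwr ht hn hassoc
    obtain ⟨τa, νa, hca, hna, hsa, hua⟩ := cd_tau_nu A hld hwr ht hn a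
    obtain ⟨τb, νb, hcb, hnb, hsb, hub⟩ := cd_tau_nu A hld hwr ht hn b
    have hsub_mul : ∀ x y z : K, A.mul (x - y) z = A.mul x z - A.mul y z := by
      intro x y z; rw [sub_eq_add_neg, hrd, cd_neg_mul, ← sub_eq_add_neg]
    have haaw : ∀ w : K, A.mul a (A.mul a w) = τa • A.mul a w - νa • w := by
      intro w
      rw [← hassoc, hsa, hsub_mul, A.smul_mul, cd_smul_one_mul]
    have hld' : ∀ x y z : K, A.mul x (y + z) = A.mul x y + A.mul x z := hld
    have hrd' : ∀ x y z : K, A.mul (x + y) z = A.mul x z + A.mul y z := hrd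
    have has' : ∀ x y z : K, A.mul (A.mul x y) z = A.mul x (A.mul y z) := hassoc
    apply Prod.ext
    · simp only [cdMul, hld', hrd', hsub_mul, cd_mul_sub A hld, A.smul_mul,
        A.mul_smul, cd_neg_mul, cd_mul_neg, A.one_mul, A.mul_one, map_add,
        map_sub, map_smul, A.conj_one, hca, hsa, haaw, hna, hua, hnb, hub, has',
        smul_add, smul_sub, smul_smul]
      module
    · simp only [cdMul, hld', hrd', hsub_mul, cd_mul_sub A hld, A.smul_mul,
        A.mul_smul, cd_neg_mul, cd_mul_neg, A.one_mul, A.mul_one, map_add,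
        map_sub, map_smul, A.conj_one, hca, hsa, haaw, hna, hua, hnb, hub, has',
        smul_add, smul_sub, smul_smul]
      module
  · -- left alternative double ⇒ associative
    intro h a b c
    obtain ⟨τ, ν, hca, hna, hsa, hua⟩ := cd_tau_nu A hld hwr ht hn a
    have h2 := congrArg Prod.snd (h (a, c) (b, 0))
    simp only [cdMul, cd_mul_zero, cd_zero_mul, smul_zero, add_zero, zero_add] at h2
    -- h2 : mul (conj a) (mul b c) + mul (mul a b) c = mul b (mul (conj a) c + mul a c)
    rw [hld, hca] at h2
    simp only [cd_wsub A hwr] at h2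
    rw [cd_mul_sub A hld, A.mul_smul] at h2
    -- h2 : τ • mul b c - mul a (mul b c) + mul (mul a b) c
    --        = (τ • mul b c - mul b (mul a c)) + mul b (mul a c)
    rw [sub_add_cancel] at h2
    have h4 : τ • A.mul b c - A.mul a (A.mul b c) + A.mul a (A.mul b c)
        = τ • A.mul b c := by abel
    exact add_left_cancel (h2.trans h4.symm)
end

section
/- Let k be an ordered field and C₁, C₂ ∈ k positive. Then x₁,x₂,x₃,x₄ ∈ k satisfy x₁² + C₁x₂² + C₂x₃² + C₁C₂x₄² = 1 if and only if there exist s₁,s₂,s₃,s₄ ∈ k, not all zero, such that with N = s₁² + C₁s₂² + C₂s₃² + C₁C₂s₄², one has x₁ = (s₁² − C₁s₂² − C₂s₃² − C₁C₂s₄²)/N and xᵢ = 2s₁sᵢ/N for i = 2,3,4. -/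
set_option maxHeartbeats 1000000


theorem stmt14 {k : Type*} [Field k] [LinearOrder k] [IsStrictOrderedRing k] (C₁ C₂ : k)
    (hC₁ : 0 < C₁) (hC₂ : 0 < C₂) (x₁ x₂ x₃ x₄ : k) :
    x₁ ^ 2 + C₁ * x₂ ^ 2 + C₂ * x₃ ^ 2 + C₁ * C₂ * x₄ ^ 2 = 1 ↔
    ∃ s₁ s₂ s₃ s₄ : k, ¬ (s₁ = 0 ∧ s₂ = 0 ∧ s₃ = 0 ∧ s₄ = 0) ∧
      x₁ = (s₁ ^ 2 - C₁ * s₂ ^ 2 - C₂ * s₃ ^ 2 - C₁ * C₂ * s₄ ^ 2) /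
        (s₁ ^ 2 + C₁ * s₂ ^ 2 + C₂ * s₃ ^ 2 + C₁ * C₂ * s₄ ^ 2) ∧
      x₂ = 2 * s₁ * s₂ / (s₁ ^ 2 + C₁ * s₂ ^ 2 + C₂ * s₃ ^ 2 + C₁ * C₂ * s₄ ^ 2) ∧
      x₃ = 2 * s₁ * s₃ / (s₁ ^ 2 + C₁ * s₂ ^ 2 + C₂ * s₃ ^ 2 + C₁ * C₂ * s₄ ^ 2) ∧
      x₄ = 2 * s₁ * s₄ / (s₁ ^ 2 + C₁ * s₂ ^ 2 + C₂ * s₃ ^ 2 + C₁ * C₂ * s₄ ^ 2) := by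
  have hCC : 0 < C₁ * C₂ := mul_pos hC₁ hC₂
  constructor
  · intro h
    by_cases hx : x₁ = -1
    · have h2 : C₁ * x₂ ^ 2 + C₂ * x₃ ^ 2 + C₁ * C₂ * x₄ ^ 2 = 0 := by
        rw [hx] at h; nlinarith
      have n2 := mul_nonneg hC₁.le (sq_nonneg x₂)
      have n3 := mul_nonneg hC₂.le (sq_nonneg x₃)
      have n4 := mul_nonneg hCC.le (sq_nonneg x₄)
      have hx2 : x₂ = 0 := by
        have : C₁ * x₂ ^ 2 = 0 := by linarith
        have := (mul_eq_zero.1 this).resolve_left hC₁.ne'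
        exact pow_eq_zero_iff two_ne_zero |>.1 this
      have hx3 : x₃ = 0 := by
        have : C₂ * x₃ ^ 2 = 0 := by linarith
        have := (mul_eq_zero.1 this).resolve_left hC₂.ne'
        exact pow_eq_zero_iff two_ne_zero |>.1 this
      have hx4 : x₄ = 0 := by
        have : C₁ * C₂ * x₄ ^ 2 = 0 := by linarith
        have := (mul_eq_zero.1 this).resolve_left hCC.ne'
        exact pow_eq_zero_iff two_ne_zero |>.1 this
      refine ⟨0, 1, 0, 0, by simp, ?_, ?_, ?_, ?_⟩
      · rw [hx]; field_simp; ring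
      · simp [hx2]
      · simp [hx3]
      · simp [hx4]
    · have hx1 : (1 : k) + x₁ ≠ 0 := fun h0 => hx (by linarith)
      have hN : (1 + x₁) ^ 2 + C₁ * x₂ ^ 2 + C₂ * x₃ ^ 2 + C₁ * C₂ * x₄ ^ 2
          = 2 * (1 + x₁) := by nlinarith
      have h2 : (2 : k) * (1 + x₁) ≠ 0 := by
        intro h0
        rcases mul_eq_zero.1 h0 with h' | h'
        · exact two_ne_zero h'
        · exact hx1 h'
      refine ⟨1 + x₁, x₂, x₃, x₄, ?_, ?_, ?_, ?_, ?_⟩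
      · rintro ⟨h1, -, -, -⟩; exact hx1 h1
      · rw [hN, eq_div_iff h2]; linear_combination h
      · rw [hN, eq_div_iff h2]; ring
      · rw [hN, eq_div_iff h2]; ring
      · rw [hN, eq_div_iff h2]; ring
  · rintro ⟨s₁, s₂, s₃, s₄, hs, h1, h2, h3, h4⟩
    have hN : 0 < s₁ ^ 2 + C₁ * s₂ ^ 2 + C₂ * s₃ ^ 2 + C₁ * C₂ * s₄ ^ 2 := by
      rcases lt_or_eq_of_le (by positivity :
          (0:k) ≤ s₁ ^ 2 + C₁ * s₂ ^ 2 + C₂ * s₃ ^ 2 + C₁ * C₂ * s₄ ^ 2) with h | h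
      · exact h
      · exfalso; apply hs
        have n1 := sq_nonneg s₁
        have n2 := mul_nonneg hC₁.le (sq_nonneg s₂)
        have n3 := mul_nonneg hC₂.le (sq_nonneg s₃)
        have n4 := mul_nonneg hCC.le (sq_nonneg s₄)
        have e1 : s₁ = 0 := by
          have : s₁ ^ 2 = 0 := by linarith
          exact pow_eq_zero_iff two_ne_zero |>.1 this
        have e2 : s₂ = 0 := by
          have : C₁ * s₂ ^ 2 = 0 := by linarith
          have := (mul_eq_zero.1 this).resolve_left hC₁.ne'
          exact pow_eq_zero_iff two_ne_zero |>.1 this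
        have e3 : s₃ = 0 := by
          have : C₂ * s₃ ^ 2 = 0 := by linarith
          have := (mul_eq_zero.1 this).resolve_left hC₂.ne'
          exact pow_eq_zero_iff two_ne_zero |>.1 this
        have e4 : s₄ = 0 := by
          have : C₁ * C₂ * s₄ ^ 2 = 0 := by linarith
          have := (mul_eq_zero.1 this).resolve_left hCC.ne'
          exact pow_eq_zero_iff two_ne_zero |>.1 this
        exact ⟨e1, e2, e3, e4⟩
    rw [h1, h2, h3, h4]
    field_simp
    ring
end

section
/- Let K be a k-algebra with conjugation that is left alternative, left distributive, weakly right distributive, with k-valued trace and anisotropic k-valued norm, and let D ∈ k. Then the Conway-Smith double K ×^D K is left distributive: x(y+z) = xy + xz for all x,y,z ∈ K ×^D K. -/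
open Classical in
/-- The Conway-Smith double multiplication, where `inv` is the inversion map of the
division algebra `K` (so `inv b = b⁻¹` for nonzero `b`). -/
noncomputable def csMul {k : Type*} [Field k] {K : Type*} [AddCommGroup K] [Module k K]
    (A : ConjAlg k K) (D : k) (inv : K → K) (x y : K × K) : K × K :=
  if x.2 = 0 then (A.mul x.1 y.1, A.mul (A.conj x.1) y.2)
  else (A.mul x.1 y.1 + D • A.conj (A.mul x.2 (A.conj y.2)),
    A.conj (A.mul (A.conj x.2) (A.conj y.1)) +
      A.conj (A.mul (A.conj x.2) (A.conj (A.mul (A.conj x.1)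
        (A.conj (A.mul (A.conj (inv x.2)) (A.conj y.2)))))))

theorem stmt15 {k : Type*} [Field k] {K : Type*} [AddCommGroup K] [Module k K] (A : ConjAlg k K) (D : k)
    (hla : A.LeftAlt) (hld : A.LeftDistrib) (hwr : A.WeakRightDistrib)
    (ht : A.TraceKValued) (hn : A.NormKValued) (haniso : A.Anisotropic)
    (inv : K → K)
    (hinv : ∀ b : K, b ≠ 0 → A.mul b (inv b) = A.one ∧ A.mul (inv b) b = A.one) :
    ∀ x y z : K × K, csMul A D inv x (y + z) = csMul A D inv x y + csMul A D inv x z := by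
  intro x y z
  rw [ConjAlg.LeftDistrib] at hld
  unfold csMul
  by_cases h : x.2 = 0 <;> simp only [h, if_true, if_false, Prod.fst_add, Prod.snd_add,
    Prod.mk_add_mk, hld, map_add, smul_add] <;> exact Prod.ext (by abel) (by abel)
end

section
/- Let K be a k-algebra with conjugation that is left alternative, left distributive, weakly right distributive, with k-valued trace and anisotropic k-valued norm, and let D ∈ k. Then the Conway-Smith double K ×^D K is left alternative: x(xy) = x²y for all x,y ∈ K ×^D K. -/
theorem stmt16 {k : Type*} [Field k] {K : Type*} [AddCommGroup K] [Module k K] (A : ConjAlg k K) (D : k)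
    (hla : A.LeftAlt) (hld : A.LeftDistrib) (hwr : A.WeakRightDistrib)
    (ht : A.TraceKValued) (hn : A.NormKValued) (haniso : A.Anisotropic)
    (inv : K → K)
    (hinv : ∀ b : K, b ≠ 0 → A.mul b (inv b) = A.one ∧ A.mul (inv b) b = A.one) :
    ∀ x y : K × K, csMul A D inv x (csMul A D inv x y) =
      csMul A D inv (csMul A D inv x x) y := by
  classical
  have hm0 : ∀ x : K, A.mul x 0 = 0 := fun x => by
    simpa using A.mul_smul (0:k) x 0
  have hmneg : ∀ x y : K, A.mul x (-y) = -A.mul x y := fun x y => by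
    simpa using A.mul_smul (-1:k) x y
  have hnegm : ∀ x y : K, A.mul (-x) y = -A.mul x y := fun x y => by
    simpa using A.smul_mul (-1:k) x y
  choose τ hτ using ht
  choose ν hν using hn
  have hσ : ∀ x : K, A.conj x = τ x • A.one - x := by
    intro x
    have h := hτ x
    simp only [ConjAlg.t] at h
    rw [eq_sub_iff_add_eq, add_comm]
    exact h
  have hνl : ∀ x : K, A.mul (A.conj x) x = ν x • A.one := fun x => hν x
  have hscale : ∀ (γ : k) (z : K), A.mul (γ • A.one) z = γ • z := fun γ z => by
    rw [A.smul_mul, A.one_mul]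
  have hscale' : ∀ (γ : k) (z : K), A.mul z (γ • A.one) = γ • z := fun γ z => by
    rw [A.mul_smul, A.mul_one]
  have hsplit : ∀ (γ : k) (u z : K), A.mul (γ • A.one + u) z = γ • z + A.mul u z :=
    fun γ u z => by rw [hwr, hscale]
  have hsq : ∀ x : K, A.mul x x = τ x • x - ν x • A.one := by
    intro x
    have h : ν x • A.one = τ x • x - A.mul x x := by
      rw [← hνl x, hσ x, sub_eq_add_neg, hsplit, hnegm]
      abel
    rw [h]; abel
  have hνr : ∀ x : K, A.mul x (A.conj x) = ν x • A.one := by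
    intro x
    rw [hσ x, sub_eq_add_neg, hld, hscale', hmneg, hsq x]
    abel
  have halt1 : ∀ x z : K, A.mul (A.conj x) (A.mul x z) = ν x • z := by
    intro x z
    have hxx : A.mul x x = (-(ν x)) • A.one + τ x • x := by rw [hsq x]; module
    rw [hσ x, sub_eq_add_neg, hsplit, hnegm, hla, hxx, hsplit, A.smul_mul]
    module
  have halt2 : ∀ x z : K, A.mul x (A.mul (A.conj x) z) = ν x • z := by
    intro x z
    have h := halt1 (A.conj x) z
    rw [A.conj_conj] at h
    rw [h, ← hscale (ν (A.conj x)) z, ← hνl (A.conj x), A.conj_conj, hνr, hscale]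
  have hconjsq : ∀ x : K, A.conj (A.mul x x) = A.mul (A.conj x) (A.conj x) := by
    intro x
    rw [hsq x, map_sub, map_smul, map_smul, A.conj_one, hσ x,
      sub_eq_add_neg (τ x • A.one) x, hsplit, hnegm, hld, hscale', hmneg, hsq x]
    module
  have hinv_eq : ∀ b : K, b ≠ 0 → ν b ≠ 0 ∧ inv b = (ν b)⁻¹ • A.conj b := by
    intro b hb
    have hνb : ν b ≠ 0 := by
      intro h
      exact haniso b hb (by rw [show A.n b = ν b • A.one from hν b, h, zero_smul])
    refine ⟨hνb, ?_⟩
    have h2 : A.mul (A.conj b) (A.mul b (inv b)) = A.mul (A.conj b) A.one := by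
      rw [(hinv b hb).1]
    rw [halt1, A.mul_one] at h2
    rw [← h2, smul_smul, inv_mul_cancel₀ hνb, one_smul]
  have hsum : ∀ (x z : K), A.mul x z + A.mul (A.conj x) z = τ x • z := by
    intro x z
    rw [hσ x, sub_eq_add_neg, hsplit, hnegm]
    abel
  have keyg : ∀ (a b : K), b ≠ 0 → ∀ (p q : K),
      csMul A D inv (a, b) (p, q) =
        (A.mul a p + D • A.conj (A.mul b (A.conj q)),
          A.conj (A.mul (A.conj b) (A.conj p)) +
            (ν b)⁻¹ • A.conj (A.mul (A.conj b) (A.conj (A.mul (A.conj a)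
              (A.conj (A.mul b (A.conj q))))))) := by
    intro a b hb p q
    obtain ⟨hνb, hib⟩ := hinv_eq b hb
    simp only [csMul]
    rw [if_neg (show ¬((a,b).2 = 0) from hb)]
    simp only [hib, map_smul, A.conj_conj, A.mul_smul, A.smul_mul]
  have hld' : ∀ x y z : K, A.mul x (y + z) = A.mul x y + A.mul x z := hld
  have hla' : ∀ x z : K, A.mul x (A.mul x z) = A.mul (A.mul x x) z := hla
  intro x y
  obtain ⟨a, b⟩ := x
  obtain ⟨c, d⟩ := y
  by_cases hb : b = 0
  · subst hb
    have e1 : csMul A D inv (a, 0) (c, d) = (A.mul a c, A.mul (A.conj a) d) := by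
      simp only [csMul]; simp only [if_true]
    have e2 : csMul A D inv (a, 0) (a, 0) = (A.mul a a, 0) := by
      simp only [csMul]; simp only [if_true]; rw [hm0]
    have e3 : csMul A D inv (a, 0) (A.mul a c, A.mul (A.conj a) d)
        = (A.mul a (A.mul a c), A.mul (A.conj a) (A.mul (A.conj a) d)) := by
      simp only [csMul]; simp only [if_true]
    have e4 : csMul A D inv (A.mul a a, 0) (c, d)
        = (A.mul (A.mul a a) c, A.mul (A.conj (A.mul a a)) d) := by
      simp only [csMul]; simp only [if_true]
    rw [e1, e2, e3, e4, hla a c, hconjsq, hla (A.conj a) d]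
  · obtain ⟨hνb, -⟩ := hinv_eq b hb
    have key := keyg a b hb
    have hub : A.conj (A.mul b (A.conj b)) = ν b • A.one := by
      rw [hνr b, map_smul, A.conj_one]
    have hτa := hτ a
    simp only [ConjAlg.t] at hτa
    have hxx : csMul A D inv (a, b) (a, b)
        = ((D * ν b) • A.one + A.mul a a, τ a • b) := by
      rw [key a b]
      simp only [Prod.mk.injEq]
      constructor
      · rw [hub, smul_smul]; abel
      · rw [hub, hscale', map_smul, A.conj_conj, A.mul_smul, map_smul, smul_smul,
          inv_mul_cancel₀ hνb, one_smul, ← map_add, ← hld, add_comm (A.conj a) a,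
          hτa, hscale', map_smul, A.conj_conj]
    rw [hxx, key c d, key]
    have hsuma : ∀ z : K, A.mul (A.conj a) z = τ a • z - A.mul a z := by
      intro z
      rw [← hsum a z]; abel
    have hcomb : A.conj (A.mul (A.conj b) (A.conj (A.mul (A.conj a) c)))
        = τ a • A.conj (A.mul (A.conj b) (A.conj c))
          - A.conj (A.mul (A.conj b) (A.conj (A.mul a c))) := by
      rw [eq_sub_iff_add_eq, add_comm, ← map_add, ← hld, ← map_add, hsum a c,
        map_smul, A.mul_smul, map_smul]
    by_cases hta : τ a = 0
    · rw [hta, zero_smul]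
      have hz : A.mul (A.conj a) (A.conj a) = (-(ν a)) • A.one := by
        rw [← hconjsq a, hsq a, hta, zero_smul, zero_sub, map_neg, map_smul,
          A.conj_one, neg_smul]
      have e5 : csMul A D inv ((D * ν b) • A.one + A.mul a a, 0) (c, d)
          = (A.mul ((D * ν b) • A.one + A.mul a a) c,
             A.mul (A.conj ((D * ν b) • A.one + A.mul a a)) d) := by
        simp only [csMul]; simp only [if_true]
      rw [e5]
      simp only [Prod.mk.injEq]
      constructor
      · simp only [map_add, map_smul, A.conj_conj, A.conj_one, hld', A.mul_smul, A.smul_mul,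
          hsplit, hscale, hscale', A.one_mul, A.mul_one, halt1, halt2, hla', smul_smul, smul_add]
        rw [hsuma (A.conj (A.mul b (A.conj d))), hta]
        match_scalars <;> field_simp <;> ring
      · simp only [map_add, map_smul, A.conj_conj, A.conj_one, hconjsq, hz, hld', A.mul_smul,
          A.smul_mul, hsplit, hscale, hscale', A.one_mul, A.mul_one, halt1, halt2, hla', smul_smul, smul_add]
        rw [hcomb, hta]
        match_scalars <;> field_simp <;> ring
    · have htb : τ a • b ≠ 0 := smul_ne_zero hta hb
      have hone : A.one ≠ 0 := fun h => hb (by rw [← A.mul_one b, h, hm0])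
      have hνtb : ν (τ a • b) = τ a * τ a * ν b := by
        have h1 : ν (τ a • b) • A.one = (τ a * τ a * ν b) • A.one := by
          rw [← hνl (τ a • b), map_smul, A.smul_mul, A.mul_smul, hνl,
            smul_smul, smul_smul]
        have h3 : (ν (τ a • b) - τ a * τ a * ν b) • A.one = 0 := by
          rw [sub_smul, h1, sub_self]
        rcases smul_eq_zero.mp h3 with h4 | h4
        · exact sub_eq_zero.mp h4
        · exact absurd h4 hone
      rw [keyg _ _ htb c d, hνtb]
      simp only [Prod.mk.injEq]
      constructor
      · simp only [map_add, map_smul, A.conj_conj, A.conj_one, hconjsq, hld', A.mul_smul,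
          A.smul_mul, hsplit, hscale, hscale', A.one_mul, A.mul_one, halt1, halt2, hla', smul_smul, smul_add]
        rw [hsuma (A.conj (A.mul b (A.conj d)))]
        match_scalars <;> field_simp <;> ring
      · simp only [map_add, map_smul, A.conj_conj, A.conj_one, hconjsq, hld', A.mul_smul,
          A.smul_mul, hsplit, hscale, hscale', A.one_mul, A.mul_one, halt1, halt2, hla', smul_smul, smul_add]
        rw [hcomb]
        match_scalars <;> field_simp <;> ring
end
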